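/- Let (Ω, F, μ) be a σ-finite measure space, let M ≥ 0, and let p : L¹(μ) → ℝ be a functional satisfying: (i) p(f + g) ≤ p(f) + p(g) for all f, g ∈ L¹(μ); (ii) p(t f) = t p(f) for all f ∈ L¹(μ) and t ≥ 0; (iii) |p(f)| ≤ M ∫ |f| dμ for all f ∈ L¹(μ); and (iv) p(f) = 0 whenever f ≤ 0 μ-almost everywhere. Then for every h ∈ L¹(μ) there exists w ∈ L^∞(μ) with 0 ≤ w ≤ M μ-almost everywhere such that ∫ f w dμ ≤ p(f) for every f ∈ L¹(μ), and ∫ h w dμ = p(h). -/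

import Mathlib

open MeasureTheory Filter Topology
open scoped ENNReal NNReal RealInnerProductSpace

theorem aux_rep {Ω : Type*} [MeasurableSpace Ω] (μ : Measure Ω) [SigmaFinite μ]
    (M : ℝ) (hM : 0 ≤ M) (l : Lp ℝ 1 μ →ₗ[ℝ] ℝ)
    (hb : ∀ f : Lp ℝ 1 μ, |l f| ≤ M * ‖f‖)
    (hpos : ∀ f : Lp ℝ 1 μ, (∀ᵐ x ∂μ, 0 ≤ f x) → 0 ≤ l f) :
    ∃ w : Ω → ℝ, Measurable w ∧ (∀ x, 0 ≤ w x ∧ w x ≤ M) ∧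
      ∀ f : Lp ℝ 1 μ, ∫ x, f x * w x ∂μ = l f := by
  obtain ⟨g, hg_pos, hg_meas, hg_int⟩ :=
    exists_pos_lintegral_lt_of_sigmaFinite μ (show (1:ENNReal) ≠ 0 by norm_num)
  set μ' : Measure Ω := μ.withDensity (fun x => (g x : ℝ≥0∞)) with hμ'
  haveI : IsFiniteMeasure μ' := isFiniteMeasure_withDensity (hg_int.trans ENNReal.one_lt_top).ne
  -- integrability of φ * g over μ for φ ∈ L²(μ')
  have hint : ∀ φ : Lp ℝ 2 μ', Integrable (fun x => (φ x) * (g x : ℝ)) μ := by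
    intro φ
    have h1 : Integrable (fun x => (φ x)) μ' :=
      memLp_one_iff_integrable.mp ((Lp.memLp φ).mono_exponent (by norm_num))
    have := (integrable_withDensity_iff_integrable_smul hg_meas).mp h1
    simpa [NNReal.smul_def, smul_eq_mul, mul_comm] using this
  -- the map T : L²(μ') → L¹(μ), φ ↦ φ · g
  set T : Lp ℝ 2 μ' → Lp ℝ 1 μ :=
    fun φ => (memLp_one_iff_integrable.mpr (hint φ)).toLp _ with hT
  have hT_coe : ∀ φ : Lp ℝ 2 μ', (T φ : Ω → ℝ) =ᵐ[μ] fun x => φ x * (g x : ℝ) :=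
    fun φ => MemLp.coeFn_toLp _
  have hT_norm : ∀ φ : Lp ℝ 2 μ', ‖T φ‖ = (eLpNorm (φ : Ω → ℝ) 1 μ').toReal := by
    intro φ
    rw [hT, Lp.norm_toLp]
    congr 1
    have h2 : ∫⁻ x, (‖φ x‖₊ : ℝ≥0∞) ∂μ' = ∫⁻ x, ((fun y => (g y : ℝ≥0∞)) * fun y => (‖φ y‖₊ : ℝ≥0∞)) x ∂μ :=
      lintegral_withDensity_eq_lintegral_mul μ hg_meas.coe_nnreal_ennreal
        ((Lp.stronglyMeasurable φ).measurable.nnnorm.coe_nnreal_ennreal)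
    rw [eLpNorm_one_eq_lintegral_enorm, eLpNorm_one_eq_lintegral_enorm]
    simp only [enorm_eq_nnnorm]
    rw [h2]
    refine lintegral_congr fun x => ?_
    simp [Pi.mul_apply, nnnorm_mul, NNReal.nnnorm_eq, mul_comm]
  have hac : μ ≪ μ' :=
    withDensity_absolutelyContinuous' hg_meas.coe_nnreal_ennreal.aemeasurable
      (Filter.Eventually.of_forall fun x => by
        simpa using (hg_pos x).ne')
  set C₀ : ℝ := ((μ' Set.univ) ^ ((2:ℝ)⁻¹)).toReal with hC₀
  have hT_le : ∀ φ : Lp ℝ 2 μ', ‖T φ‖ ≤ C₀ * ‖φ‖ := by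
    intro φ
    have hle := eLpNorm_le_eLpNorm_mul_rpow_measure_univ (μ := μ') (p := 1) (q := 2)
      (by norm_num) (Lp.aestronglyMeasurable φ)
    have he : 1 / (1:ℝ≥0∞).toReal - 1 / (2:ℝ≥0∞).toReal = (2:ℝ)⁻¹ := by
      norm_num
    rw [he] at hle
    rw [hT_norm φ, Lp.norm_def]
    calc (eLpNorm (φ:Ω→ℝ) 1 μ').toReal
        ≤ (eLpNorm (φ:Ω→ℝ) 2 μ' * (μ' Set.univ) ^ ((2:ℝ)⁻¹)).toReal := by
          refine ENNReal.toReal_mono ?_ hle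
          exact ENNReal.mul_ne_top (Lp.eLpNorm_ne_top φ)
            (ENNReal.rpow_ne_top_of_nonneg (by norm_num) (measure_ne_top _ _))
      _ = C₀ * (eLpNorm (φ:Ω→ℝ) 2 μ').toReal := by
          rw [ENNReal.toReal_mul, hC₀, mul_comm]
  -- k : bounded linear functional on L²(μ')
  have hTadd : ∀ φ ψ : Lp ℝ 2 μ', T (φ + ψ) = T φ + T ψ := by
    intro φ ψ
    rw [hT]
    simp only
    rw [← MemLp.toLp_add]
    refine MemLp.toLp_congr _ _ ?_
    filter_upwards [hac.ae_eq (Lp.coeFn_add φ ψ)] with x hx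
    rw [hx]
    simp [add_mul]
  have hTsmul : ∀ (c : ℝ) (φ : Lp ℝ 2 μ'), T (c • φ) = c • T φ := by
    intro c φ
    rw [hT]
    simp only
    rw [← MemLp.toLp_const_smul]
    refine MemLp.toLp_congr _ _ ?_
    filter_upwards [hac.ae_eq (Lp.coeFn_smul c φ)] with x hx
    rw [hx]
    simp [mul_assoc]
  let k : Lp ℝ 2 μ' →L[ℝ] ℝ :=
    LinearMap.mkContinuousOfExistsBound
      { toFun := fun φ => l (T φ)
        map_add' := fun φ ψ => by simp [hTadd φ ψ]
        map_smul' := fun c φ => by simp [hTsmul c φ] }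
      ⟨M * C₀, fun φ => by
        simp only [LinearMap.coe_mk, AddHom.coe_mk, Real.norm_eq_abs]
        calc |l (T φ)| ≤ M * ‖T φ‖ := hb _
          _ ≤ M * (C₀ * ‖φ‖) := by
              exact mul_le_mul_of_nonneg_left (hT_le φ) hM
          _ = M * C₀ * ‖φ‖ := by ring⟩
  obtain ⟨u, hu⟩ : ∃ u : Lp ℝ 2 μ', ∀ φ : Lp ℝ 2 μ', ∫ x, u x * φ x ∂μ' = l (T φ) := by
    refine ⟨(InnerProductSpace.toDual ℝ (Lp ℝ 2 μ')).symm k, fun φ => ?_⟩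
    have h1 : ⟪(InnerProductSpace.toDual ℝ (Lp ℝ 2 μ')).symm k, φ⟫ = k φ :=
      InnerProductSpace.toDual_symm_apply
    rw [L2.inner_def] at h1
    simp only [RCLike.inner_apply, conj_trivial] at h1
    calc _ = ∫ a, φ a * ((InnerProductSpace.toDual ℝ (Lp ℝ 2 μ')).symm k) a ∂μ' := by
          congr 1; funext x; ring
      _ = k φ := h1
      _ = l (T φ) := rfl
  have hu_int : Integrable (u : Ω → ℝ) μ' :=
    memLp_one_iff_integrable.mp ((Lp.memLp u).mono_exponent (by norm_num))
  -- set integral facts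
  have hset : ∀ s : Set Ω, MeasurableSet s →
      (0 ≤ ∫ x in s, u x ∂μ' ∧ ∫ x in s, u x ∂μ' ≤ M * (μ' s).toReal) := by
    intro s hs
    set φA : Lp ℝ 2 μ' := indicatorConstLp 2 hs (measure_ne_top μ' s) (1:ℝ) with hφA
    have hφA_coe : (φA : Ω → ℝ) =ᵐ[μ'] s.indicator (fun _ => (1:ℝ)) :=
      indicatorConstLp_coeFn
    have ha : ∫ x, u x * φA x ∂μ' = ∫ x in s, u x ∂μ' := by
      rw [← integral_indicator hs]
      refine integral_congr_ae ?_
      filter_upwards [hφA_coe] with x hx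
      rw [hx]
      by_cases hxs : x ∈ s <;> simp [Set.indicator_of_mem, Set.indicator_of_notMem, hxs]
    have hb1 : 0 ≤ l (T φA) := by
      refine hpos _ ?_
      filter_upwards [hT_coe φA, hac.ae_eq hφA_coe] with x h1 h2
      rw [h1, h2]
      by_cases hxs : x ∈ s <;>
        simp [Set.indicator_of_mem, Set.indicator_of_notMem, hxs, (g x).coe_nonneg]
    have hc1 : l (T φA) ≤ M * (μ' s).toReal := by
      refine (le_abs_self _).trans ((hb _).trans ?_)
      rw [hT_norm φA]
      have : eLpNorm (φA : Ω → ℝ) 1 μ' = μ' s := by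
        rw [eLpNorm_congr_ae hφA_coe,
          eLpNorm_indicator_const hs one_ne_zero ENNReal.one_ne_top]
        simp
      rw [this]
    exact ⟨by rw [← ha]; rw [hu φA]; exact hb1, by rw [← ha, hu φA]; exact hc1⟩
  have hu_nonneg : 0 ≤ᵐ[μ'] (u : Ω → ℝ) :=
    ae_nonneg_of_forall_setIntegral_nonneg hu_int fun s hs _ => (hset s hs).1
  have hu_le : ∀ᵐ x ∂μ', (u : Ω → ℝ) x ≤ M := by
    have h0 : 0 ≤ᵐ[μ'] fun x => M - u x := by
      refine ae_nonneg_of_forall_setIntegral_nonneg ((integrable_const M).sub hu_int)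
        fun s hs _ => ?_
      rw [integral_sub (integrableOn_const (C := M) (measure_ne_top μ' s)) hu_int.integrableOn,
        setIntegral_const]
      have := (hset s hs).2
      simp only [smul_eq_mul, Measure.real]
      linarith [this]
    filter_upwards [h0] with x hx
    simpa using hx
  -- the weight
  set w : Ω → ℝ := fun x => max 0 (min M (u x)) with hw
  have hw_meas : Measurable w :=
    measurable_const.max (measurable_const.min (Lp.stronglyMeasurable u).measurable)
  have hw_bdd : ∀ x, 0 ≤ w x ∧ w x ≤ M :=
    fun x => ⟨le_max_left _ _, max_le hM (min_le_left _ _)⟩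
  have hwu' : w =ᵐ[μ'] (u : Ω → ℝ) := by
    filter_upwards [hu_nonneg, hu_le] with x h1 h2
    rw [hw]
    simp only
    rw [min_eq_right h2, max_eq_right (show (0:ℝ) ≤ u x by simpa using h1)]
  have hwu : w =ᵐ[μ] (u : Ω → ℝ) := hac.ae_eq hwu'
  refine ⟨w, hw_meas, hw_bdd, fun f => ?_⟩
  set F : Ω → ℝ := (f : Ω → ℝ) with hF
  have hF_meas : Measurable F := (Lp.stronglyMeasurable f).measurable
  have hF_int : Integrable F μ := L1.integrable_coeFn f
  set fseq : ℕ → Ω → ℝ := fun n x => if |F x| ≤ (n:ℝ) * (g x : ℝ) then F x else 0 with hfseq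
  set φfun : ℕ → Ω → ℝ :=
    fun n x => if |F x| ≤ (n:ℝ) * (g x : ℝ) then F x / (g x : ℝ) else 0 with hφfun
  have hcond_meas : ∀ n : ℕ, MeasurableSet {x | |F x| ≤ (n:ℝ) * (g x : ℝ)} := fun n =>
    measurableSet_le hF_meas.abs (measurable_const.mul hg_meas.coe_nnreal_real)
  have hφ_meas : ∀ n, Measurable (φfun n) := fun n =>
    Measurable.ite (hcond_meas n) (hF_meas.div hg_meas.coe_nnreal_real) measurable_const
  have hfseq_meas : ∀ n, Measurable (fseq n) := fun n =>
    Measurable.ite (hcond_meas n) hF_meas measurable_const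
  have hφ_mem : ∀ n, MemLp (φfun n) 2 μ' := by
    intro n
    refine MemLp.of_bound (hφ_meas n).aestronglyMeasurable (n:ℝ)
      (Filter.Eventually.of_forall fun x => ?_)
    rw [hφfun]
    simp only
    split_ifs with hx
    · rw [Real.norm_eq_abs, abs_div, abs_of_pos (show (0:ℝ) < g x from hg_pos x)]
      rw [div_le_iff₀ (show (0:ℝ) < g x from hg_pos x)]
      exact hx
    · simpa using n.cast_nonneg
  set φn : ℕ → Lp ℝ 2 μ' := fun n => (hφ_mem n).toLp _ with hφn
  -- T (φn n) is a.e. equal (w.r.t. μ) to fseq n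
  have hTn : ∀ n, ((T (φn n) : Lp ℝ 1 μ) : Ω → ℝ) =ᵐ[μ] fseq n := by
    intro n
    filter_upwards [hT_coe (φn n), hac.ae_eq (MemLp.coeFn_toLp (hφ_mem n))] with x h1 h2
    rw [h1, h2, hφfun, hfseq]
    simp only
    split_ifs with hx
    · exact div_mul_cancel₀ _ (by exact_mod_cast (hg_pos x).ne')
    · simp
  -- per-n identity
  have hper : ∀ n, l (T (φn n)) = ∫ x, fseq n x * w x ∂μ := by
    intro n
    rw [← hu (φn n)]
    have e1 : ∫ x, u x * (φn n) x ∂μ' = ∫ x, u x * φfun n x ∂μ' := by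
      refine integral_congr_ae ?_
      filter_upwards [MemLp.coeFn_toLp (hφ_mem n)] with x hx
      rw [hx]
    have e2 : ∫ x, u x * φfun n x ∂μ' = ∫ x, g x • (u x * φfun n x) ∂μ :=
      integral_withDensity_eq_integral_smul hg_meas _
    have e3 : ∫ x, g x • (u x * φfun n x) ∂μ = ∫ x, fseq n x * w x ∂μ := by
      refine integral_congr_ae ?_
      filter_upwards [hwu] with x hx
      rw [NNReal.smul_def, smul_eq_mul, hx, hφfun, hfseq]
      simp only
      split_ifs with hcase
      · rw [mul_comm ((g x : ℝ)) _, mul_assoc, div_mul_cancel₀ _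
          (by exact_mod_cast (hg_pos x).ne' : (g x : ℝ) ≠ 0), mul_comm]
      · simp
    rw [e1, e2, e3]
  -- limit on the left: T (φn n) → f in L¹
  have hcond_ev : ∀ x : Ω, ∀ᶠ n : ℕ in atTop, |F x| ≤ (n:ℝ) * (g x : ℝ) := by
    intro x
    obtain ⟨N, hN⟩ := exists_nat_ge (|F x| / (g x : ℝ))
    filter_upwards [Filter.eventually_ge_atTop N] with n hn
    rw [← div_le_iff₀ (show (0:ℝ) < g x from hg_pos x)] at *
    exact hN.trans (by exact_mod_cast hn)
  have hnorm0 : Tendsto (fun n => ‖T (φn n) - f‖) atTop (𝓝 0) := by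
    have hrw : ∀ n, ‖T (φn n) - f‖ = ∫ x, ‖fseq n x - F x‖ ∂μ := by
      intro n
      rw [L1.norm_eq_integral_norm]
      refine integral_congr_ae ?_
      filter_upwards [Lp.coeFn_sub (T (φn n)) f, hTn n] with x h1 h2
      rw [h1, Pi.sub_apply, h2]
    simp only [hrw]
    have h0 : (0:ℝ) = ∫ (_ : Ω), (0:ℝ) ∂μ := by simp
    rw [h0]
    refine tendsto_integral_of_dominated_convergence (fun x => ‖F x‖)
      (fun n => (((hfseq_meas n).sub hF_meas).norm).aestronglyMeasurable)
      hF_int.norm ?_ ?_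
    · intro n
      refine Filter.Eventually.of_forall fun x => ?_
      rw [hfseq]
      simp only [norm_norm]
      split_ifs with hx <;> simp [Real.norm_eq_abs, abs_nonneg]
    · refine Filter.Eventually.of_forall fun x => ?_
      refine Tendsto.congr' ?_ tendsto_const_nhds
      filter_upwards [hcond_ev x] with n hn
      rw [hfseq]
      simp [hn]
  have hlim1 : Tendsto (fun n => l (T (φn n))) atTop (𝓝 (l f)) := by
    have hdiff : Tendsto (fun n => l (T (φn n)) - l f) atTop (𝓝 0) := by
      refine squeeze_zero_norm (a := fun n => M * ‖T (φn n) - f‖) (fun n => ?_) ?_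
      · have he : ‖l (T (φn n)) - l f‖ = |l (T (φn n) - f)| := by
          rw [map_sub, Real.norm_eq_abs]
        rw [he]
        exact hb _
      · simpa using hnorm0.const_mul M
    have := hdiff.add (tendsto_const_nhds (x := l f))
    simpa using this
  -- limit on the right
  have hlim2 : Tendsto (fun n => ∫ x, fseq n x * w x ∂μ) atTop (𝓝 (∫ x, F x * w x ∂μ)) := by
    refine tendsto_integral_of_dominated_convergence (fun x => |F x| * M)
      (fun n => ((hfseq_meas n).mul hw_meas).aestronglyMeasurable)
      (hF_int.abs.mul_const M) ?_ ?_
    · intro n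
      refine Filter.Eventually.of_forall fun x => ?_
      rw [Real.norm_eq_abs, abs_mul]
      refine mul_le_mul ?_ ?_ (abs_nonneg _) (abs_nonneg _)
      · rw [hfseq]; simp only; split_ifs <;> simp [le_abs_self, abs_nonneg]
      · rw [abs_of_nonneg (hw_bdd x).1]; exact (hw_bdd x).2
    · refine Filter.Eventually.of_forall fun x => ?_
      refine Tendsto.congr' ?_ tendsto_const_nhds
      filter_upwards [hcond_ev x] with n hn
      rw [hfseq]
      simp [hn]
  have heq := tendsto_nhds_unique (hlim1.congr fun n => hper n) hlim2
  exact heq.symm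

/-- Hahn–Banach / L¹–L∞ duality step of the unimodular Frostman lemma:
a subadditive, positively homogeneous functional `p` on `L¹(μ)` that is bounded
by `M ∫|f|` and vanishes on a.e.-nonpositive functions is dominated from below by
integration against some `w ∈ L∞` with `0 ≤ w ≤ M`, with equality at a given `h`. -/
theorem frostman_functional_representation
    {Ω : Type*} [MeasurableSpace Ω] (μ : Measure Ω) [SigmaFinite μ]
    (M : ℝ) (hM : 0 ≤ M) (p : Lp ℝ 1 μ → ℝ)
    (hsub : ∀ f g : Lp ℝ 1 μ, p (f + g) ≤ p f + p g)
    (hhomog : ∀ (f : Lp ℝ 1 μ) (t : ℝ), 0 ≤ t → p (t • f) = t * p f)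
    (hbound : ∀ f : Lp ℝ 1 μ, |p f| ≤ M * ∫ x, |f x| ∂μ)
    (hneg : ∀ f : Lp ℝ 1 μ, (∀ᵐ x ∂μ, f x ≤ 0) → p f = 0)
    (h : Lp ℝ 1 μ) :
    ∃ w : Ω → ℝ, Measurable w ∧ (∀ᵐ x ∂μ, 0 ≤ w x ∧ w x ≤ M) ∧
      (∀ f : Lp ℝ 1 μ, ∫ x, f x * w x ∂μ ≤ p f) ∧ (∫ x, h x * w x ∂μ) = p h := by
  have hp0 : p 0 = 0 := by simpa using hhomog 0 0 le_rfl
  have hkey : ∀ (c : ℝ) (x : Lp ℝ 1 μ), c * p x ≤ p (c • x) := by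
    intro c x
    rcases le_or_gt 0 c with hc | hc
    · rw [hhomog x c hc]
    · have h1 : (0:ℝ) ≤ p (c • x) + p ((-c) • x) := by
        have := hsub (c • x) ((-c) • x)
        simpa [hp0, ← add_smul] using this
      have h2 : p ((-c) • x) = (-c) * p x := hhomog x (-c) (by linarith)
      linarith [h1, h2.le]
  obtain ⟨l, hl_le, hl_h⟩ :
      ∃ l : Lp ℝ 1 μ →ₗ[ℝ] ℝ, (∀ f, l f ≤ p f) ∧ l h = p h := by
    by_cases hh : h = 0
    · obtain ⟨l, -, hl⟩ := exists_extension_of_le_sublinear ⟨⊥, 0⟩ p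
        (fun c hc x => hhomog x c hc.le) hsub (fun x => by
          have hx : (x : Lp ℝ 1 μ) = 0 := (Submodule.mem_bot ℝ).mp x.2
          simp [hx, hp0])
      exact ⟨l, hl, by simp [hh, hp0]⟩
    · have hdom : ∀ x : (LinearPMap.mkSpanSingleton (K := ℝ) (σ := RingHom.id ℝ) h (p h) hh).domain,
          (LinearPMap.mkSpanSingleton (K := ℝ) (σ := RingHom.id ℝ) h (p h) hh) x ≤ p x := by
        rintro ⟨x, hx⟩
        obtain ⟨c, rfl⟩ := Submodule.mem_span_singleton.1 hx
        rw [show LinearPMap.mkSpanSingleton (σ := RingHom.id ℝ) h (p h) hh ⟨c • h, hx⟩ = c • p h from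
          LinearPMap.mkSpanSingleton'_apply h (p h) _ c hx]
        simpa [smul_eq_mul] using hkey c h
      obtain ⟨l, hext, hl⟩ := exists_extension_of_le_sublinear
        (LinearPMap.mkSpanSingleton h (p h) hh) p
        (fun c hc x => hhomog x c hc.le) hsub hdom
      refine ⟨l, hl, ?_⟩
      have := hext ⟨h, Submodule.mem_span_singleton_self h⟩
      rwa [LinearPMap.mkSpanSingleton_apply] at this
  have hnorm : ∀ f : Lp ℝ 1 μ, ∫ x, |f x| ∂μ = ‖f‖ := by
    intro f
    rw [L1.norm_eq_integral_norm]
    simp [Real.norm_eq_abs]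
  have hb : ∀ f : Lp ℝ 1 μ, |l f| ≤ M * ‖f‖ := by
    intro f
    rw [abs_le]
    constructor
    · have h1 : l (-f) ≤ p (-f) := hl_le _
      have h2 : p (-f) ≤ M * ‖f‖ := by
        refine ((le_abs_self _).trans (hbound (-f))).trans ?_
        rw [hnorm (-f), norm_neg]
      rw [map_neg] at h1
      linarith
    · refine (hl_le f).trans (((le_abs_self _).trans (hbound f)).trans ?_)
      rw [hnorm f]
  have hpos : ∀ f : Lp ℝ 1 μ, (∀ᵐ x ∂μ, 0 ≤ f x) → 0 ≤ l f := by
    intro f hf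
    have h1 : l (-f) ≤ p (-f) := hl_le _
    have h2 : p (-f) = 0 := by
      refine hneg _ ?_
      filter_upwards [Lp.coeFn_neg f, hf] with x hx1 hx2
      rw [hx1]
      simpa using hx2
    rw [map_neg] at h1
    linarith
  obtain ⟨w, hw_meas, hw_bdd, hw_rep⟩ := aux_rep μ M hM l hb hpos
  exact ⟨w, hw_meas, Filter.Eventually.of_forall hw_bdd,
    fun f => (hw_rep f).le.trans (hl_le f), by rw [hw_rep h, hl_h]⟩
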